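/- arXiv:0709.4393 — 2 statements merged into one kernel-verified Lean document; each statement's English description precedes it below -/
import Mathlib

section
/- In the group G₄, the images of the generators satisfy (a₁⁻²b₁a₁²)⁶ = (a₂⁻²b₂a₂²)⁶. -/
/-! The group `G₄`: quotient of the free group on `a₁, b₁, a₂, b₂` (modelled on
`Fin 4` with `0 = a₁`, `1 = b₁`, `2 = a₂`, `3 = b₂`) by the normal closure of
`[a₁,b₁][a₂,b₂]` and `a₁⁻²b₁⁴a₁² · a₂⁻²b₂⁻³a₂² · a₁⁻²b₁²a₁² · a₂⁻²b₂⁻³a₂²`. -/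

open scoped commutatorElement

/-- The surface relator `[a₁,b₁][a₂,b₂]`. -/
def rel1 : FreeGroup (Fin 4) :=
  ⁅FreeGroup.of (0 : Fin 4), FreeGroup.of (1 : Fin 4)⁆ *
    ⁅FreeGroup.of (2 : Fin 4), FreeGroup.of (3 : Fin 4)⁆

/-- The relator `a₁⁻²b₁⁴a₁² a₂⁻²b₂⁻³a₂² a₁⁻²b₁²a₁² a₂⁻²b₂⁻³a₂²`. -/
def rel2 : FreeGroup (Fin 4) :=
  FreeGroup.of (0 : Fin 4) ^ (-2 : ℤ) * FreeGroup.of (1 : Fin 4) ^ 4 *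
    FreeGroup.of (0 : Fin 4) ^ 2 *
  (FreeGroup.of (2 : Fin 4) ^ (-2 : ℤ) * FreeGroup.of (3 : Fin 4) ^ (-3 : ℤ) *
    FreeGroup.of (2 : Fin 4) ^ 2) *
  (FreeGroup.of (0 : Fin 4) ^ (-2 : ℤ) * FreeGroup.of (1 : Fin 4) ^ 2 *
    FreeGroup.of (0 : Fin 4) ^ 2) *
  (FreeGroup.of (2 : Fin 4) ^ (-2 : ℤ) * FreeGroup.of (3 : Fin 4) ^ (-3 : ℤ) *
    FreeGroup.of (2 : Fin 4) ^ 2)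

/-- The group `G₄`. -/
abbrev G4 : Type :=
  FreeGroup (Fin 4) ⧸ Subgroup.normalClosure {rel1, rel2}

/-- The image in `G₄` of the `i`-th generator. -/
def g4 (i : Fin 4) : G4 :=
  QuotientGroup.mk' (Subgroup.normalClosure {rel1, rel2}) (FreeGroup.of i)

/-- From `X⁴UX²U = 1` one deduces `X⁶ = U⁻²` in any group. -/
lemma aux_rel {G : Type*} [Group G] (X U : G) (h : X ^ 4 * U * X ^ 2 * U = 1) :
    X ^ 6 = U⁻¹ * U⁻¹ := by
  have hc : X ^ 2 * U * X ^ 4 * U = 1 := by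
    have : X ^ 2 * U * X ^ 4 * U
        = (X ^ 4 * U)⁻¹ * (X ^ 4 * U * X ^ 2 * U) * (X ^ 4 * U) := by group
    rw [this, h]; group
  have e1 : X ^ 4 * U * X ^ 2 = U⁻¹ := by
    have := congrArg (· * U⁻¹) h
    simpa [mul_assoc] using this
  have e2 : X ^ 2 * U * X ^ 4 = U⁻¹ := by
    have := congrArg (· * U⁻¹) hc
    simpa [mul_assoc] using this
  have e3 : X ^ 4 * U * X ^ 2 = X ^ 2 * U * X ^ 4 := e1.trans e2.symm
  have comm : X ^ 2 * U = U * X ^ 2 := by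
    calc X ^ 2 * U = X⁻¹ ^ 2 * (X ^ 4 * U * X ^ 2) * X⁻¹ ^ 2 := by group
    _ = X⁻¹ ^ 2 * (X ^ 2 * U * X ^ 4) * X⁻¹ ^ 2 := by rw [e3]
    _ = U * X ^ 2 := by group
  have key : X ^ 6 * (U * U) = 1 := by
    calc X ^ 6 * (U * U) = X ^ 4 * (X ^ 2 * U) * U := by group
    _ = X ^ 4 * (U * X ^ 2) * U := by rw [comm]
    _ = 1 := by rw [← h]; group
  have := congrArg (· * (U * U)⁻¹) key
  simpa [mul_assoc] using this

/-- In `G₄`, the images of the generators satisfy `(a₁⁻²b₁a₁²)⁶ = (a₂⁻²b₂a₂²)⁶`. -/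
theorem g4_relation :
    (g4 0 ^ (-2 : ℤ) * g4 1 * g4 0 ^ 2) ^ 6 =
      (g4 2 ^ (-2 : ℤ) * g4 3 * g4 2 ^ 2) ^ 6 := by
  set N := Subgroup.normalClosure ({rel1, rel2} : Set (FreeGroup (Fin 4))) with hN
  have h0 : QuotientGroup.mk' N rel2 = 1 := by
    rw [QuotientGroup.mk'_apply, QuotientGroup.eq_one_iff]
    exact Subgroup.subset_normalClosure (by simp)
  set X : G4 := g4 0 ^ (-2 : ℤ) * g4 1 * g4 0 ^ 2 with hX
  set Y : G4 := g4 2 ^ (-2 : ℤ) * g4 3 * g4 2 ^ 2 with hY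
  have hrel : X ^ 4 * Y ^ (-3 : ℤ) * X ^ 2 * Y ^ (-3 : ℤ) = 1 := by
    have himg : QuotientGroup.mk' N rel2
        = g4 0 ^ (-2 : ℤ) * g4 1 ^ 4 * g4 0 ^ 2 *
          (g4 2 ^ (-2 : ℤ) * g4 3 ^ (-3 : ℤ) * g4 2 ^ 2) *
          (g4 0 ^ (-2 : ℤ) * g4 1 ^ 2 * g4 0 ^ 2) *
          (g4 2 ^ (-2 : ℤ) * g4 3 ^ (-3 : ℤ) * g4 2 ^ 2) := by
      simp only [rel2, map_mul, map_pow, map_zpow]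
      rfl
    have : g4 0 ^ (-2 : ℤ) * g4 1 ^ 4 * g4 0 ^ 2 *
          (g4 2 ^ (-2 : ℤ) * g4 3 ^ (-3 : ℤ) * g4 2 ^ 2) *
          (g4 0 ^ (-2 : ℤ) * g4 1 ^ 2 * g4 0 ^ 2) *
          (g4 2 ^ (-2 : ℤ) * g4 3 ^ (-3 : ℤ) * g4 2 ^ 2) = 1 := by
      rw [← himg, h0]
    have hconjX : X = g4 0 ^ (-2 : ℤ) * g4 1 * (g4 0 ^ (-2 : ℤ))⁻¹ := by rw [hX]; group
    have hconjY : Y = g4 2 ^ (-2 : ℤ) * g4 3 * (g4 2 ^ (-2 : ℤ))⁻¹ := by rw [hY]; group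
    have hX4 : X ^ 4 = g4 0 ^ (-2 : ℤ) * g4 1 ^ 4 * g4 0 ^ 2 := by
      rw [hconjX, conj_pow]; group
    have hX2 : X ^ 2 = g4 0 ^ (-2 : ℤ) * g4 1 ^ 2 * g4 0 ^ 2 := by
      rw [hconjX, conj_pow]; group
    have hY3 : Y ^ (-3 : ℤ) = g4 2 ^ (-2 : ℤ) * g4 3 ^ (-3 : ℤ) * g4 2 ^ 2 := by
      rw [hconjY, conj_zpow]; group
    rw [hX4, hY3, hX2]
    exact this
  have h6 : X ^ 6 = (Y ^ (-3 : ℤ))⁻¹ * (Y ^ (-3 : ℤ))⁻¹ := aux_rel X (Y ^ (-3 : ℤ)) hrel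
  calc X ^ 6 = (Y ^ (-3 : ℤ))⁻¹ * (Y ^ (-3 : ℤ))⁻¹ := h6
  _ = Y ^ 6 := by group
end

section
/- Let M₁ be the subgroup of G₄ generated by the images of a₁ and b₁, and M₂ the subgroup of G₄ generated by the images of a₂ and b₂. Then M₁ and M₂ have exceptional intersection: M₁ ∩ M₂ is strictly larger than the cyclic subgroup of G₄ generated by the image of [a₁,b₁] (which is the image of the intersection of the corresponding subgroups of the genus-2 surface group). -/
open scoped commutatorElement

-- relations in G4
lemma r1 : ⁅g4 0, g4 1⁆ * ⁅g4 2, g4 3⁆ = 1 := by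
  have h : (QuotientGroup.mk' (Subgroup.normalClosure {rel1, rel2}))
      (⁅FreeGroup.of (0 : Fin 4), FreeGroup.of (1 : Fin 4)⁆ *
        ⁅FreeGroup.of (2 : Fin 4), FreeGroup.of (3 : Fin 4)⁆) = 1 :=
    (QuotientGroup.eq_one_iff _).mpr
      (Subgroup.subset_normalClosure (Set.mem_insert _ _))
  simpa only [map_mul, map_commutatorElement, g4] using h

lemma r2 : g4 0 ^ (-2 : ℤ) * g4 1 ^ 4 * g4 0 ^ 2 *
    (g4 2 ^ (-2 : ℤ) * g4 3 ^ (-3 : ℤ) * g4 2 ^ 2) *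
    (g4 0 ^ (-2 : ℤ) * g4 1 ^ 2 * g4 0 ^ 2) *
    (g4 2 ^ (-2 : ℤ) * g4 3 ^ (-3 : ℤ) * g4 2 ^ 2) = 1 := by
  have h : (QuotientGroup.mk' (Subgroup.normalClosure {rel1, rel2}))
      (FreeGroup.of (0 : Fin 4) ^ (-2 : ℤ) * FreeGroup.of (1 : Fin 4) ^ 4 *
      FreeGroup.of (0 : Fin 4) ^ 2 *
    (FreeGroup.of (2 : Fin 4) ^ (-2 : ℤ) * FreeGroup.of (3 : Fin 4) ^ (-3 : ℤ) *
      FreeGroup.of (2 : Fin 4) ^ 2) *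
    (FreeGroup.of (0 : Fin 4) ^ (-2 : ℤ) * FreeGroup.of (1 : Fin 4) ^ 2 *
      FreeGroup.of (0 : Fin 4) ^ 2) *
    (FreeGroup.of (2 : Fin 4) ^ (-2 : ℤ) * FreeGroup.of (3 : Fin 4) ^ (-3 : ℤ) *
      FreeGroup.of (2 : Fin 4) ^ 2)) = 1 :=
    (QuotientGroup.eq_one_iff _).mpr
      (Subgroup.subset_normalClosure (Set.mem_insert_of_mem _ rfl))
  simpa only [map_mul, map_pow, map_zpow, g4] using h

-- the homomorphism to ℤ killing a₁, a₂ and sending b₁, b₂ to 1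
def fAux : FreeGroup (Fin 4) →* Multiplicative ℤ :=
  FreeGroup.lift fun i => Multiplicative.ofAdd (![0, 1, 0, 1] i)

lemma fAux_rel1 : fAux rel1 = 1 := by
  simp [fAux, rel1, commutatorElement_def, map_mul, map_inv]


lemma fAux_rel2 : fAux rel2 = 1 := by
  simp only [fAux, rel2, map_mul, map_pow, map_zpow, FreeGroup.lift_apply_of]
  decide

def phi : G4 →* Multiplicative ℤ :=
  QuotientGroup.lift (Subgroup.normalClosure {rel1, rel2}) fAux (by
    intro x hx
    refine (Subgroup.normalClosure_le_normal (N := fAux.ker) ?_) hx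
    rintro y (rfl | rfl)
    · exact fAux_rel1
    · exact fAux_rel2)

lemma phi_g4 (i : Fin 4) : phi (g4 i) = Multiplicative.ofAdd (![0, 1, 0, 1] i) := by
  simp [phi, g4, fAux]


/-- The Magnus subgroups `M₁ = ⟨a₁, b₁⟩` and `M₂ = ⟨a₂, b₂⟩` of `G₄` have
**exceptional intersection**: `M₁ ∩ M₂` is strictly larger than the cyclic subgroup
generated by the image of `[a₁,b₁]` (the image of the intersection of the
corresponding subgroups of the genus-2 surface group). -/
theorem g4_exceptional_intersection :
    Subgroup.zpowers ⁅g4 0, g4 1⁆ <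
      Subgroup.closure {g4 0, g4 1} ⊓ Subgroup.closure {g4 2, g4 3} := by
  set A := g4 0; set B := g4 1; set C := g4 2; set D := g4 3
  have hA : A ∈ Subgroup.closure {A, B} := Subgroup.subset_closure (by simp)
  have hB : B ∈ Subgroup.closure {A, B} := Subgroup.subset_closure (by simp)
  have hC : C ∈ Subgroup.closure {C, D} := Subgroup.subset_closure (by simp)
  have hD : D ∈ Subgroup.closure {C, D} := Subgroup.subset_closure (by simp)
  set X : G4 := A ^ (-2 : ℤ) * B ^ 2 * A ^ 2 with hX
  set V : G4 := C ^ (-2 : ℤ) * D ^ (-3 : ℤ) * C ^ 2 with hV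
  have hXmem : X ∈ Subgroup.closure {A, B} :=
    mul_mem (mul_mem (Subgroup.zpow_mem _ hA _) (pow_mem hB 2)) (pow_mem hA 2)
  have hVmem : V ∈ Subgroup.closure {C, D} :=
    mul_mem (mul_mem (Subgroup.zpow_mem _ hC _) (Subgroup.zpow_mem _ hD _)) (pow_mem hC 2)
  -- the relation X² V X V = 1
  have h : X * X * V * X * V = 1 := by
    have e : X * X * V * X * V =
        A ^ (-2 : ℤ) * B ^ 4 * A ^ 2 * (C ^ (-2 : ℤ) * D ^ (-3 : ℤ) * C ^ 2) *
        (A ^ (-2 : ℤ) * B ^ 2 * A ^ 2) * (C ^ (-2 : ℤ) * D ^ (-3 : ℤ) * C ^ 2) := by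
      rw [hX, hV]; group
    rw [e]; exact r2
  -- cyclic conjugate: X V X X V = 1
  have h' : X * V * X * X * V = 1 := by
    have e : X * V * X * X * V = (X * X * V)⁻¹ * (X * X * V * X * V) * (X * X * V) := by
      group
    rw [e, h]; group
  -- hence X and V commute
  have hc : X * V = V * X := by
    have e := h.trans h'.symm
    simp only [mul_assoc] at e
    have e2 := mul_left_cancel e
    simp only [← mul_assoc] at e2
    exact mul_right_cancel (mul_right_cancel e2)
  -- hence V² = (X³)⁻¹
  have h3 : X * X * X * (V * V) = 1 := by
    calc X * X * X * (V * V) = X * X * (X * V) * V := by group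
    _ = X * X * (V * X) * V := by rw [hc]
    _ = X * X * V * X * V := by group
    _ = 1 := h
  have hVV : V * V = (X * X * X)⁻¹ := (inv_eq_of_mul_eq_one_right h3).symm
  have pA : phi A = Multiplicative.ofAdd 0 := phi_g4 0
  have pB : phi B = Multiplicative.ofAdd 1 := phi_g4 1
  have pC : phi C = Multiplicative.ofAdd 0 := phi_g4 2
  have pD : phi D = Multiplicative.ofAdd 1 := phi_g4 3
  have comm_mem : ∀ (H : Subgroup G4) (x y : G4), x ∈ H → y ∈ H → ⁅x, y⁆ ∈ H := by
    intro H x y hx hy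
    rw [commutatorElement_def]
    exact mul_mem (mul_mem (mul_mem hx hy) (inv_mem hx)) (inv_mem hy)
  rw [SetLike.lt_iff_le_and_exists]
  constructor
  · rw [Subgroup.zpowers_le, Subgroup.mem_inf]
    refine ⟨comm_mem _ _ _ hA hB, ?_⟩
    have : ⁅A, B⁆ = ⁅C, D⁆⁻¹ := by
      rw [eq_inv_iff_mul_eq_one]; exact r1
    rw [this]
    exact inv_mem (comm_mem _ _ _ hC hD)
  · refine ⟨V * V, Subgroup.mem_inf.mpr
      ⟨by rw [hVV]; exact inv_mem (mul_mem (mul_mem hXmem hXmem) hXmem),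
        mul_mem hVmem hVmem⟩, ?_⟩
    rintro ⟨n, hn⟩
    have hphi := congrArg phi hn
    rw [map_zpow, map_mul] at hphi
    rw [commutatorElement_def, map_mul, map_mul, map_mul, map_inv, map_inv,
      pA, pB] at hphi
    rw [hV, map_mul, map_mul, map_zpow, map_zpow, map_pow, pC, pD] at hphi
    have hval := congrArg Multiplicative.toAdd hphi
    simp only [toAdd_zpow, toAdd_mul, toAdd_pow, toAdd_inv, toAdd_ofAdd] at hval
    norm_num at hval
end
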